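/- Let S be a finite set of points in the plane such that the distance between any two distinct points of S is greater than √2. Then the graph on S where two points are adjacent iff their distance is at most 2, drawn with straight-line segments between adjacent points, is a planar drawing: no two edges (segments joining adjacent pairs with disjoint endpoint sets) intersect except possibly at shared endpoints. -/

import Mathlib

lemma key_cross (t s W Z P : ℝ) (ht0 : 0 ≤ t) (ht1 : t ≤ 1) (hs0 : 0 ≤ s) (hs1 : s ≤ 1)
    (hW : W ≤ 4) (hZ : Z ≤ 4)
    (h1 : 2 < t^2*W + s^2*Z - 2*t*s*P)
    (h2 : 2 < (1-t)^2*W + (1-s)^2*Z - 2*(1-t)*(1-s)*P)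
    (h3 : 2 < t^2*W + (1-s)^2*Z + 2*t*(1-s)*P)
    (h4 : 2 < (1-t)^2*W + s^2*Z + 2*(1-t)*s*P) : False := by
  nlinarith [mul_nonneg (mul_nonneg (sub_nonneg.2 ht1) (sub_nonneg.2 hs1)) (le_of_lt (by linarith : (0:ℝ) < t^2*W + s^2*Z - 2*t*s*P - 2)),
    mul_nonneg (mul_nonneg ht0 hs0) (le_of_lt (by linarith : (0:ℝ) < (1-t)^2*W + (1-s)^2*Z - 2*(1-t)*(1-s)*P - 2)),
    mul_nonneg (mul_nonneg (sub_nonneg.2 ht1) hs0) (le_of_lt (by linarith : (0:ℝ) < t^2*W + (1-s)^2*Z + 2*t*(1-s)*P - 2)),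
    mul_nonneg (mul_nonneg ht0 (sub_nonneg.2 hs1)) (le_of_lt (by linarith : (0:ℝ) < (1-t)^2*W + s^2*Z + 2*(1-t)*s*P - 2)),
    mul_nonneg (mul_nonneg ht0 (sub_nonneg.2 ht1)) (sub_nonneg.2 hW),
    mul_nonneg (mul_nonneg hs0 (sub_nonneg.2 hs1)) (sub_nonneg.2 hZ),
    sq_nonneg (2*t-1), sq_nonneg (2*s-1)]

lemma norm_comb_sq (w z : EuclideanSpace ℝ (Fin 2)) (a b : ℝ) :
    ‖a • w + b • z‖^2 = a^2 * ‖w‖^2 + b^2 * ‖z‖^2 + 2*a*b * (inner ℝ w z : ℝ) := by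
  rw [← real_inner_self_eq_norm_sq]
  simp only [inner_add_add_self, real_inner_smul_left, real_inner_smul_right,
    real_inner_self_eq_norm_sq, norm_smul, mul_pow, sq_abs, Real.norm_eq_abs]
  rw [real_inner_comm z w]
  ring

theorem stmt_1 (S : Finset (EuclideanSpace ℝ (Fin 2)))
    (hS : ∀ p ∈ S, ∀ q ∈ S, p ≠ q → Real.sqrt 2 < dist p q) :
    ∀ p1 ∈ S, ∀ p2 ∈ S, ∀ q1 ∈ S, ∀ q2 ∈ S,
      p1 ≠ p2 → q1 ≠ q2 → dist p1 p2 ≤ 2 → dist q1 q2 ≤ 2 →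
      ({p1, p2} : Set (EuclideanSpace ℝ (Fin 2))) ∩ {q1, q2} = ∅ →
      segment ℝ p1 p2 ∩ segment ℝ q1 q2 = ∅ := by
  intro p1 hp1 p2 hp2 q1 hq1 q2 hq2 hp12 hq12 hdp hdq hdisj
  rw [Set.eq_empty_iff_forall_notMem]
  rintro x ⟨hx1, hx2⟩
  rw [Set.eq_empty_iff_forall_notMem] at hdisj
  have hne : ∀ p ∈ ({p1, p2} : Set _), ∀ q ∈ ({q1, q2} : Set _), p ≠ q := by
    intro p hp q hq h; exact hdisj p ⟨hp, h ▸ hq⟩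
  have sq2 : ∀ p ∈ S, ∀ q ∈ S, p ≠ q → 2 < ‖q - p‖^2 := by
    intro p hp q hq h
    have h1 := hS p hp q hq h
    have h2 : Real.sqrt 2 ^ 2 < dist p q ^ 2 := by
      apply pow_lt_pow_left₀ h1 (Real.sqrt_nonneg 2); norm_num
    rw [Real.sq_sqrt (by norm_num : (0:ℝ) ≤ 2)] at h2
    rwa [dist_eq_norm'] at h2
  obtain ⟨a, b, ha, hb, hab, hx⟩ := hx1
  obtain ⟨c, d, hc, hd, hcd, hy⟩ := hx2
  set w := p2 - p1 with hw
  set z := q2 - q1 with hz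
  have hb1 : b ≤ 1 := by linarith
  have hd1 : d ≤ 1 := by linarith
  have hxp1 : x - p1 = b • w := by
    rw [← hx, hw]; rw [show a = 1 - b by linarith]; module
  have hxp2 : x - p2 = (-(1-b)) • w := by
    rw [← hx, hw]; rw [show a = 1 - b by linarith]; module
  have hxq1 : x - q1 = d • z := by
    rw [← hy, hz]; rw [show c = 1 - d by linarith]; module
  have hxq2 : x - q2 = (-(1-d)) • z := by
    rw [← hy, hz]; rw [show c = 1 - d by linarith]; module
  set W := ‖w‖^2 with hWdef
  set Z := ‖z‖^2 with hZdef
  set P : ℝ := inner ℝ w z with hPdef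
  have hW4 : W ≤ 4 := by
    have : ‖w‖ ≤ 2 := by rwa [dist_eq_norm'] at hdp
    nlinarith [norm_nonneg w]
  have hZ4 : Z ≤ 4 := by
    have : ‖z‖ ≤ 2 := by rwa [dist_eq_norm'] at hdq
    nlinarith [norm_nonneg z]
  have e11 : q1 - p1 = b • w + (-d) • z := by
    have h : q1 - p1 = (x - p1) - (x - q1) := by abel
    rw [h, hxp1, hxq1]; module
  have e12 : q2 - p1 = b • w + (1-d) • z := by
    have h : q2 - p1 = (x - p1) - (x - q2) := by abel
    rw [h, hxp1, hxq2]; module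
  have e21 : q1 - p2 = (-(1-b)) • w + (-d) • z := by
    have h : q1 - p2 = (x - p2) - (x - q1) := by abel
    rw [h, hxp2, hxq1]; module
  have e22 : q2 - p2 = (-(1-b)) • w + (1-d) • z := by
    have h : q2 - p2 = (x - p2) - (x - q2) := by abel
    rw [h, hxp2, hxq2]; module
  have n11 : 2 < b^2*W + (-d)^2*Z + 2*b*(-d)*P := by
    rw [hWdef, hZdef, hPdef, ← norm_comb_sq, ← e11]
    exact sq2 p1 hp1 q1 hq1 (hne p1 (by simp) q1 (by simp))
  have n12 : 2 < b^2*W + (1-d)^2*Z + 2*b*(1-d)*P := by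
    rw [hWdef, hZdef, hPdef, ← norm_comb_sq, ← e12]
    exact sq2 p1 hp1 q2 hq2 (hne p1 (by simp) q2 (by simp))
  have n21 : 2 < (-(1-b))^2*W + (-d)^2*Z + 2*(-(1-b))*(-d)*P := by
    rw [hWdef, hZdef, hPdef, ← norm_comb_sq, ← e21]
    exact sq2 p2 hp2 q1 hq1 (hne p2 (by simp) q1 (by simp))
  have n22 : 2 < (-(1-b))^2*W + (1-d)^2*Z + 2*(-(1-b))*(1-d)*P := by
    rw [hWdef, hZdef, hPdef, ← norm_comb_sq, ← e22]
    exact sq2 p2 hp2 q2 hq2 (hne p2 (by simp) q2 (by simp))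
  exact key_cross b d W Z P hb hb1 hd hd1 hW4 hZ4
    (by linarith [n11]) (by linarith [n22]) (by linarith [n12]) (by linarith [n21])
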